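/- Let g, τ, γ be natural numbers with g̃ := g − γ − 2τ ≥ 1. Define, for 0 ≤ j ≤ i ≤ τ and 0 ≤ k ≤ γ, the theta-hyperplane counts t(i,j,k) by: t(i,j,k) = 2^(2g̃ + τ − j − 1) · C(τ,i) · C(i,j) · C(γ,k) whenever j < i; and t(i,i,k) = 2^(τ−i) · C(τ,i) · C(γ,k) · N_{g̃} if τ − i + γ − k is even, while t(i,i,k) = 2^(τ−i) · C(τ,i) · C(γ,k) · N⁺_{g̃} if τ − i + γ − k is odd. Then the total degree of the configuration of theta hyperplanes, counted with the multiplicities 4^(i−j)·6^j·3^k of a theta hyperplane of type (i,j,k), satisfies ∑_{i=0}^{τ} ∑_{j=0}^{i} ∑_{k=0}^{γ} 4^(i−j) · 6^j · 3^k · t(i,j,k) = N_g. -/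
import Mathlib


open Finset

/-- `N m = 2^(m-1) * (2^m - 1)`, the number of odd theta characteristics
of a smooth curve of genus `m`. -/
def thetaOdd (m : ℕ) : ℕ := 2 ^ (m - 1) * (2 ^ m - 1)

/-- `N⁺ m = 2^(m-1) * (2^m + 1)`, the number of even theta characteristics
of a smooth curve of genus `m`. -/
def thetaEven (m : ℕ) : ℕ := 2 ^ (m - 1) * (2 ^ m + 1)

lemma binom_sum (x y : ℤ) (n : ℕ) :
    ∑ k ∈ Finset.range (n + 1), x ^ k * y ^ (n - k) * (n.choose k : ℤ) = (x + y) ^ n :=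
  (add_pow x y n).symm

theorem weighted_theta_hyperplane_count
    (g τ γ g' : ℕ)
    (hle : γ + 2 * τ ≤ g)
    (hg' : g' = g - γ - 2 * τ)
    (hg1 : 1 ≤ g')
    (t : ℕ → ℕ → ℕ → ℕ)
    (ht : ∀ i j k, j ≤ i → i ≤ τ → k ≤ γ →
      t i j k =
        if j < i then
          2 ^ (2 * g' + τ - j - 1) * Nat.choose τ i * Nat.choose i j * Nat.choose γ k
        else if (τ - i + γ - k) % 2 = 0 then
          2 ^ (τ - i) * Nat.choose τ i * Nat.choose γ k * thetaOdd g'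
        else
          2 ^ (τ - i) * Nat.choose τ i * Nat.choose γ k * thetaEven g') :
    (∑ i ∈ Finset.range (τ + 1), ∑ j ∈ Finset.range (i + 1),
        ∑ k ∈ Finset.range (γ + 1), 4 ^ (i - j) * 6 ^ j * 3 ^ k * t i j k)
      = thetaOdd g := by
  have hg : g = g' + γ + 2 * τ := by omega
  subst hg
  have h2 : (1:ℕ) ≤ 2 ^ g' := Nat.one_le_two_pow
  -- binomial sums
  have hAk : ∑ k ∈ Finset.range (γ + 1), (3:ℤ) ^ k * 1 ^ (γ - k) * (γ.choose k : ℤ) = 4 ^ γ := by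
    rw [binom_sum]; norm_num
  have hBk : ∑ k ∈ Finset.range (γ + 1), (3:ℤ) ^ k * (-1) ^ (γ - k) * (γ.choose k : ℤ) = 2 ^ γ := by
    rw [binom_sum]; norm_num
  have S14 : ∑ i ∈ Finset.range (τ + 1), (14:ℤ) ^ i * 2 ^ (τ - i) * (τ.choose i : ℤ) = 16 ^ τ := by
    rw [binom_sum]; norm_num
  have S6n : ∑ i ∈ Finset.range (τ + 1), (6:ℤ) ^ i * (-2) ^ (τ - i) * (τ.choose i : ℤ) = 4 ^ τ := by
    rw [binom_sum]; norm_num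
  have key : ((∑ i ∈ Finset.range (τ + 1), ∑ j ∈ Finset.range (i + 1),
        ∑ k ∈ Finset.range (γ + 1), 4 ^ (i - j) * 6 ^ j * 3 ^ k * t i j k : ℕ) : ℤ)
      = ((thetaOdd (g' + γ + 2 * τ) : ℕ) : ℤ) := by
    have hθ : ((thetaOdd (g' + γ + 2 * τ) : ℕ) : ℤ)
        = 2 ^ ((g' - 1) + γ + 2 * τ) * (2 ^ (g' + γ + 2 * τ) - 1) := by
      rw [thetaOdd, Nat.cast_mul, Nat.cast_sub Nat.one_le_two_pow]
      push_cast
      congr 2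
      omega
    rw [hθ]
    push_cast
    have step1 : ∀ i ∈ Finset.range (τ + 1),
        (∑ j ∈ Finset.range (i + 1), ∑ k ∈ Finset.range (γ + 1),
          (4:ℤ) ^ (i - j) * 6 ^ j * 3 ^ k * (t i j k : ℤ))
        = (2 ^ (g' - 1) * 2 ^ g' * 4 ^ γ) * ((14:ℤ) ^ i * 2 ^ (τ - i) * (τ.choose i : ℤ))
          + (-(2 ^ (g' - 1) * 2 ^ γ)) * ((6:ℤ) ^ i * (-2) ^ (τ - i) * (τ.choose i : ℤ)) := by
      intro i hi
      have hiτ : i ≤ τ := by simpa [Nat.lt_succ_iff] using Finset.mem_range.mp hi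
      rw [Finset.sum_range_succ]
      -- Part A : j < i
      have hA : (∑ j ∈ Finset.range i, ∑ k ∈ Finset.range (γ + 1),
            (4:ℤ) ^ (i - j) * 6 ^ j * 3 ^ k * (t i j k : ℤ))
          = (2 ^ (2 * g' - 1) * 2 ^ (τ - i) * (τ.choose i : ℤ)) * ((14 ^ i - 6 ^ i) * 4 ^ γ) := by
        have h1 : ∀ j ∈ Finset.range i, ∀ k ∈ Finset.range (γ + 1),
            (4:ℤ) ^ (i - j) * 6 ^ j * 3 ^ k * (t i j k : ℤ)
            = ((2 ^ (2 * g' - 1) * 2 ^ (τ - i) * (τ.choose i : ℤ))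
                * ((6:ℤ) ^ j * 8 ^ (i - j) * (i.choose j : ℤ)))
              * ((3:ℤ) ^ k * 1 ^ (γ - k) * (γ.choose k : ℤ)) := by
          intro j hj k hk
          have hj' : j < i := Finset.mem_range.mp hj
          have hk' : k ≤ γ := by have := Finset.mem_range.mp hk; omega
          rw [ht i j k hj'.le hiτ hk', if_pos hj']
          push_cast
          have he : 2 * g' + τ - j - 1 = (2 * g' - 1) + (τ - i) + (i - j) := by omega
          have h8 : (8:ℤ) ^ (i - j) = 4 ^ (i - j) * 2 ^ (i - j) := by
            rw [← mul_pow]; norm_num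
          rw [he, h8, pow_add, pow_add, one_pow]
          ring
        have h1' : (∑ j ∈ Finset.range i, ∑ k ∈ Finset.range (γ + 1),
              (4:ℤ) ^ (i - j) * 6 ^ j * 3 ^ k * (t i j k : ℤ))
            = ∑ j ∈ Finset.range i, ∑ k ∈ Finset.range (γ + 1),
              ((2 ^ (2 * g' - 1) * 2 ^ (τ - i) * (τ.choose i : ℤ))
                * ((6:ℤ) ^ j * 8 ^ (i - j) * (i.choose j : ℤ)))
              * ((3:ℤ) ^ k * 1 ^ (γ - k) * (γ.choose k : ℤ)) :=
          Finset.sum_congr rfl fun j hj => Finset.sum_congr rfl (h1 j hj)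
        rw [h1', ← Finset.sum_mul_sum, hAk, ← Finset.mul_sum]
        have hBj : ∑ j ∈ Finset.range i, (6:ℤ) ^ j * 8 ^ (i - j) * (i.choose j : ℤ)
            = 14 ^ i - 6 ^ i := by
          have h := binom_sum 6 8 i
          rw [Finset.sum_range_succ] at h
          simp only [Nat.sub_self, pow_zero, Nat.choose_self, Nat.cast_one, mul_one] at h
          have : (6:ℤ) + 8 = 14 := by norm_num
          rw [this] at h
          linarith
        rw [hBj]; ring
      rw [hA]
      -- Part B : j = i
      have hB : (∑ k ∈ Finset.range (γ + 1),
            (4:ℤ) ^ (i - i) * 6 ^ i * 3 ^ k * (t i i k : ℤ))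
          = ((6:ℤ) ^ i * 2 ^ (τ - i) * (τ.choose i : ℤ) * 2 ^ (g' - 1) * 2 ^ g')
              * (∑ k ∈ Finset.range (γ + 1), (3:ℤ) ^ k * 1 ^ (γ - k) * (γ.choose k : ℤ))
            - ((6:ℤ) ^ i * 2 ^ (τ - i) * (τ.choose i : ℤ) * 2 ^ (g' - 1) * (-1) ^ (τ - i))
              * (∑ k ∈ Finset.range (γ + 1), (3:ℤ) ^ k * (-1) ^ (γ - k) * (γ.choose k : ℤ)) := by
        rw [Finset.mul_sum, Finset.mul_sum, ← Finset.sum_sub_distrib]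
        refine Finset.sum_congr rfl fun k hk => ?_
        have hk' : k ≤ γ := by have := Finset.mem_range.mp hk; omega
        have hsplit : (-1:ℤ) ^ (τ - i + γ - k) = (-1) ^ (τ - i) * (-1) ^ (γ - k) := by
          rw [← pow_add]; congr 1; omega
        have hcast : (t i i k : ℤ)
            = 2 ^ (τ - i) * (τ.choose i : ℤ) * (γ.choose k : ℤ)
              * (2 ^ (g' - 1) * (2 ^ g' - (-1) ^ (τ - i) * (-1) ^ (γ - k))) := by
          rw [ht i i k le_rfl hiτ hk', if_neg (lt_irrefl i), ← hsplit]
          by_cases hp : (τ - i + γ - k) % 2 = 0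
          · rw [if_pos hp]
            have hpow : (-1:ℤ) ^ (τ - i + γ - k) = 1 :=
              (Nat.even_iff.mpr hp).neg_one_pow
            rw [hpow, thetaOdd]
            push_cast [Nat.cast_sub Nat.one_le_two_pow]
            ring
          · rw [if_neg hp]
            have hpow : (-1:ℤ) ^ (τ - i + γ - k) = -1 :=
              (Nat.odd_iff.mpr (by omega)).neg_one_pow
            rw [hpow, thetaEven]
            push_cast
            ring
        rw [hcast, Nat.sub_self]
        ring
      rw [hB, hAk, hBk]
      have h2g : (2:ℤ) ^ (2 * g' - 1) = 2 ^ (g' - 1) * 2 ^ g' := by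
        rw [← pow_add]; congr 1; omega
      have h2n : (-2:ℤ) ^ (τ - i) = (-1) ^ (τ - i) * 2 ^ (τ - i) := by
        rw [← mul_pow]; norm_num
      rw [h2g, h2n]
      ring
    rw [Finset.sum_congr rfl step1, Finset.sum_add_distrib, ← Finset.mul_sum, ← Finset.mul_sum,
      S14, S6n]
    have hgg : (2:ℤ) ^ g' = 2 ^ (g' - 1) * 2 := by
      rw [← pow_succ]; congr 1; omega
    have h16τ : (16:ℤ) ^ τ = 2 ^ τ * 2 ^ τ * 2 ^ τ * 2 ^ τ := by
      rw [← mul_pow, ← mul_pow, ← mul_pow]; norm_num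
    have h4τ : (4:ℤ) ^ τ = 2 ^ τ * 2 ^ τ := by rw [← mul_pow]; norm_num
    have h4γ : (4:ℤ) ^ γ = 2 ^ γ * 2 ^ γ := by rw [← mul_pow]; norm_num
    have hexp1 : (2:ℤ) ^ ((g' - 1) + γ + 2 * τ) = 2 ^ (g' - 1) * 2 ^ γ * (2 ^ τ * 2 ^ τ) := by
      rw [pow_add, pow_add, two_mul, pow_add]
    have hexp2 : (2:ℤ) ^ (g' + γ + 2 * τ)
        = 2 ^ (g' - 1) * 2 * 2 ^ γ * (2 ^ τ * 2 ^ τ) := by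
      rw [pow_add, pow_add, two_mul, pow_add, hgg]
    rw [hgg, h16τ, h4τ, h4γ, hexp1, hexp2]
    ring
  exact_mod_cast key
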